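/- For all n ≥ 1 and p ≥ 1, the number of p-ascent sequences of length n avoiding the pattern 10 equals the sum over s from 0 to n-1 of C(n-1, s) · C(p+s-1, s). -/

import Mathlib

/-- Number of ascents of a sequence: indices j with a_j < a_{j+1}. -/
def ascN (l : List ℕ) : ℕ := (l.zip l.tail).countP (fun q => decide (q.1 < q.2))

/-- `a` is a p-ascent sequence: nonempty, starts with 0, and each later entry
is at most `p` plus the number of ascents of the preceding prefix. -/
def IsPAsc (p : ℕ) (a : List ℕ) : Prop :=
  a.head? = some 0 ∧ ∀ i : Fin a.length, 1 ≤ i.val → a.get i ≤ p + ascN (a.take i.val)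

def Avoids01 (a : List ℕ) : Prop := ∀ i j : Fin a.length, i < j → ¬ a.get i < a.get j

def Avoids10 (a : List ℕ) : Prop := ∀ i j : Fin a.length, i < j → ¬ a.get j < a.get i

def Avoids012 (a : List ℕ) : Prop :=
  ∀ i j k : Fin a.length, i < j → j < k → ¬ (a.get i < a.get j ∧ a.get j < a.get k)

/-- primitive: no two equal consecutive letters -/
def Primitive (a : List ℕ) : Prop := a.Chain' (· ≠ ·)

/-- partial sums starting at a -/
def psums : ℕ → List ℕ → List ℕ
  | a, [] => [a]
  | a, x :: t => a :: psums (a + x) t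

lemma psums_length (a : ℕ) (d : List ℕ) : (psums a d).length = d.length + 1 := by
  induction d generalizing a with
  | nil => rfl
  | cons x t ih => simp [psums, ih]

lemma psums_eq_cons (b : ℕ) (t : List ℕ) : ∃ r, psums b t = b :: r := by
  cases t <;> exact ⟨_, rfl⟩

lemma psums_head? (a : ℕ) (d : List ℕ) : (psums a d).head? = some a := by
  obtain ⟨r, hr⟩ := psums_eq_cons a d; rw [hr]; rfl

lemma psums_mem_le (a : ℕ) (d : List ℕ) : ∀ y ∈ psums a d, a ≤ y := by
  induction d generalizing a with
  | nil => intro y hy; simp [psums] at hy; omega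
  | cons x t ih =>
    intro y hy
    simp only [psums, List.mem_cons] at hy
    rcases hy with rfl | hy
    · exact le_refl y
    · exact le_trans (Nat.le_add_right a x) (ih (a + x) y hy)

lemma psums_pairwise (a : ℕ) (d : List ℕ) : (psums a d).Pairwise (· ≤ ·) := by
  induction d generalizing a with
  | nil => simp [psums]
  | cons x t ih =>
    refine List.Pairwise.cons ?_ (ih (a + x))
    intro y hy
    exact le_trans (Nat.le_add_right a x) (psums_mem_le (a + x) t y hy)

lemma psums_take (a : ℕ) (d : List ℕ) (i : ℕ) :
    (psums a d).take (i + 1) = psums a (d.take i) := by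
  induction d generalizing a i with
  | nil => simp [psums]
  | cons x t ih =>
    cases i with
    | zero => simp [psums]
    | succ i' =>
      show a :: (psums (a + x) t).take (i' + 1) = psums a (x :: t.take i')
      rw [ih (a + x) i']
      rfl

lemma psums_get (a : ℕ) (d : List ℕ) (i : ℕ) (h : i < d.length + 1) :
    (psums a d)[i]'(by rw [psums_length]; exact h) = a + (d.take i).sum := by
  induction d generalizing a i with
  | nil =>
    simp only [List.length_nil] at h
    have hi : i = 0 := by omega
    subst hi; simp [psums]
  | cons x t ih =>
    cases i with
    | zero => simp [psums]
    | succ i' =>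
      simp only [psums, List.getElem_cons_succ, List.take_succ_cons, List.sum_cons]
      rw [ih (a + x) i' (by simpa using h)]
      omega

lemma ascN_cons_cons (a b : ℕ) (t : List ℕ) :
    ascN (a :: b :: t) = ascN (b :: t) + (if a < b then 1 else 0) := by
  simp [ascN, List.countP_cons]

lemma psums_ascN (a : ℕ) (d : List ℕ) :
    ascN (psums a d) = d.countP (fun x => decide (0 < x)) := by
  induction d generalizing a with
  | nil => simp [psums, ascN]
  | cons x t ih =>
    obtain ⟨r, hr⟩ := psums_eq_cons (a + x) t
    show ascN (a :: psums (a + x) t) = _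
    rw [hr, ascN_cons_cons, ← hr, ih (a + x), List.countP_cons]
    simp only [decide_eq_true_eq]
    have : a < a + x ↔ 0 < x := by omega
    split <;> split <;> omega

lemma psums_injective (a : ℕ) : Function.Injective (psums a) := by
  intro d e h
  induction d generalizing a e with
  | nil =>
    cases e with
    | nil => rfl
    | cons y s =>
      exfalso
      have := congrArg List.length h
      simp [psums, psums_length] at this
  | cons x t ih =>
    cases e with
    | nil =>
      exfalso
      have := congrArg List.length h
      simp [psums, psums_length] at this
    | cons y s =>
      simp only [psums, List.cons.injEq, true_and] at h
      have hxy : x = y := by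
        have := congrArg List.head? h
        rw [psums_head?, psums_head?] at this
        simp at this; omega
      subst hxy
      rw [ih (a + x) h]

def diffs : List ℕ → List ℕ
  | x :: y :: t => (y - x) :: diffs (y :: t)
  | _ => []

lemma diffs_length : ∀ l : List ℕ, (diffs l).length = l.length - 1
  | [] => rfl
  | [_] => rfl
  | x :: y :: t => by
    show (diffs (y :: t)).length + 1 = _
    rw [diffs_length (y :: t)]; simp

lemma psums_diffs : ∀ (x : ℕ) (t : List ℕ), List.Chain' (· ≤ ·) (x :: t) →
    psums x (diffs (x :: t)) = x :: t := by
  intro x t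
  induction t generalizing x with
  | nil => intro _; rfl
  | cons y s ih =>
    intro hc
    have hxy : x ≤ y := (List.isChain_cons_cons.mp hc).1
    have hc' : List.Chain' (· ≤ ·) (y :: s) := (List.isChain_cons_cons.mp hc).2
    show x :: psums (x + (y - x)) (diffs (y :: s)) = x :: y :: s
    rw [Nat.add_sub_cancel' hxy, ih y hc']

lemma sum_eq_mapsum_add_count (l : List ℕ) :
    l.sum = ((l.map (· - 1)).sum + l.countP (fun x => decide (0 < x))) := by
  induction l with
  | nil => rfl
  | cons x t ih =>
    rw [List.sum_cons, List.map_cons, List.sum_cons, List.countP_cons, ih]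
    simp only [decide_eq_true_eq]
    split <;> omega

lemma mapsum_take_le (d : List ℕ) (k : ℕ) :
    ((d.take k).map (· - 1)).sum ≤ (d.map (· - 1)).sum := by
  have h : ((d.take k).map (· - 1)).sum + ((d.drop k).map (· - 1)).sum
      = (d.map (· - 1)).sum := by
    rw [← List.sum_append, ← List.map_append, List.take_append_drop]
  omega

lemma countP_take_succ_le (d : List ℕ) (i : ℕ) (pr : ℕ → Bool) :
    (d.take (i + 1)).countP pr ≤ (d.take i).countP pr + 1 := by
  rw [List.take_succ, List.countP_append]
  have : (d[i]?.toList).countP pr ≤ 1 := by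
    cases h : d[i]? with
    | none => simp
    | some v => simp [List.countP_cons]; split <;> simp
  omega

/-- forward bound: total ∸-sum small implies all prefix conditions -/
lemma cond_of_mapsum (p : ℕ) (hp : 1 ≤ p) (d : List ℕ)
    (h : (d.map (· - 1)).sum ≤ p - 1) (i : ℕ) (_ : i < d.length) :
    (d.take (i + 1)).sum ≤ p + (d.take i).countP (fun x => decide (0 < x)) := by
  have h1 := sum_eq_mapsum_add_count (d.take (i + 1))
  have h2 := mapsum_take_le d (i + 1)
  have h3 := countP_take_succ_le d i (fun x => decide (0 < x))
  omega

/-- backward: all prefix conditions imply total ∸-sum small -/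
lemma mapsum_of_cond (p : ℕ) (hp : 1 ≤ p) (d : List ℕ)
    (h : ∀ i < d.length, (d.take (i + 1)).sum ≤ p + (d.take i).countP (fun x => decide (0 < x))) :
    (d.map (· - 1)).sum ≤ p - 1 := by
  induction d using List.reverseRecOn with
  | nil => simpa using hp
  | append_singleton d' x ih =>
    have hlen : (d' ++ [x]).length = d'.length + 1 := by simp
    have ih' : (d'.map (· - 1)).sum ≤ p - 1 := by
      apply ih
      intro i hi
      have := h i (by omega)
      rwa [List.take_append_of_le_length (by omega),
        List.take_append_of_le_length (by omega)] at this
    rcases Nat.eq_zero_or_pos x with rfl | hx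
    · simpa using ih'
    · have hlast := h d'.length (by omega)
      rw [show (d' ++ [x]).take (d'.length + 1) = d' ++ [x] from
            List.take_of_length_le (by simp),
          List.take_append_of_le_length (le_refl _),
          List.take_of_length_le (le_refl _)] at hlast
      have hsum : (d' ++ [x]).sum = d'.sum + x := by simp
      have h4 := sum_eq_mapsum_add_count d'
      have h5 : ((d' ++ [x]).map (· - 1)).sum = (d'.map (· - 1)).sum + (x - 1) := by simp
      omega

def DF : ℕ → ℕ → Finset (List ℕ)
  | 0, _ => {[]}
  | (m+1), q => (Finset.range (q+2)).biUnion (fun v => (DF m (q - (v - 1))).image (List.cons v))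

lemma mem_DF : ∀ (m q : ℕ) (d : List ℕ),
    d ∈ DF m q ↔ d.length = m ∧ (d.map (· - 1)).sum ≤ q := by
  intro m
  induction m with
  | zero =>
    intro q d
    simp [DF, List.length_eq_zero_iff]
    rintro rfl; simp
  | succ m ih =>
    intro q d
    simp only [DF, Finset.mem_biUnion, Finset.mem_range, Finset.mem_image, ih]
    constructor
    · rintro ⟨v, hv, t, ⟨hlen, hsum⟩, rfl⟩
      refine ⟨by simp [hlen], ?_⟩
      simp only [List.map_cons, List.sum_cons]
      omega
    · rintro ⟨hlen, hsum⟩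
      cases d with
      | nil => simp at hlen
      | cons v t =>
        simp only [List.map_cons, List.sum_cons] at hsum
        exact ⟨v, by omega, t, ⟨by simpa using hlen, by omega⟩, rfl⟩

lemma hockey (q s : ℕ) :
    ∑ e ∈ Finset.range (q + 1), (e + s).choose s = (q + s + 1).choose (s + 1) := by
  induction q with
  | zero => simp
  | succ q ih =>
    rw [Finset.sum_range_succ, ih, show q + 1 + s = q + s + 1 from by omega,
        Nat.choose_succ_succ' (q + s + 1) s]
    omega

def G (m q : ℕ) : ℕ := ∑ s ∈ Finset.range (m + 1), m.choose s * (q + s).choose s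

lemma G_rec (m q : ℕ) : G (m + 1) q = G m q + ∑ e ∈ Finset.range (q + 1), G m e := by
  have hswap : ∑ e ∈ Finset.range (q + 1), G m e
      = ∑ s ∈ Finset.range (m + 1), m.choose s * (q + s + 1).choose (s + 1) := by
    unfold G
    rw [Finset.sum_comm]
    refine Finset.sum_congr rfl fun s _ => ?_
    rw [← Finset.mul_sum, hockey]
  rw [hswap]
  unfold G
  rw [Finset.sum_range_succ' (fun s => (m+1).choose s * (q + s).choose s) (m+1),
      Finset.sum_range_succ' (fun s => m.choose s * (q + s).choose s) m]
  simp only [Nat.choose_zero_right, Nat.add_zero, one_mul, Nat.mul_one]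
  have hext : ∑ s ∈ Finset.range m, m.choose (s+1) * (q + (s+1)).choose (s+1)
      = ∑ s ∈ Finset.range (m+1), m.choose (s+1) * (q + (s+1)).choose (s+1) := by
    rw [Finset.sum_range_succ, Nat.choose_succ_self, zero_mul, add_zero]
  rw [hext]
  have key : ∀ s ∈ Finset.range (m+1), (m+1).choose (s+1) * (q + (s+1)).choose (s+1)
      = m.choose (s+1) * (q + (s+1)).choose (s+1) + m.choose s * (q + s + 1).choose (s+1) := by
    intro s _
    have h1 : (m+1).choose (s+1) = m.choose s + m.choose (s+1) := Nat.choose_succ_succ' m s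
    have h2 : q + (s+1) = q + s + 1 := by omega
    rw [h1, h2, Nat.add_mul]
    omega
  rw [Finset.sum_congr rfl key, Finset.sum_add_distrib]
  omega

lemma card_DF : ∀ (m q : ℕ), (DF m q).card = G m q := by
  intro m
  induction m with
  | zero => intro q; simp [DF, G]
  | succ m ih =>
    intro q
    have hdisj : ∀ v ∈ Finset.range (q+2), ∀ v' ∈ Finset.range (q+2), v ≠ v' →
        Disjoint ((DF m (q - (v - 1))).image (List.cons v))
          ((DF m (q - (v' - 1))).image (List.cons v')) := by
      intro v _ v' _ hvv'
      rw [Finset.disjoint_left]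
      rintro x hx hx'
      simp only [Finset.mem_image] at hx hx'
      obtain ⟨t, _, rfl⟩ := hx
      obtain ⟨t', _, h⟩ := hx'
      injection h with h1 h2
      exact hvv' h1.symm
    rw [show DF (m+1) q = (Finset.range (q+2)).biUnion
          (fun v => (DF m (q - (v - 1))).image (List.cons v)) from rfl,
        Finset.card_biUnion hdisj]
    have hcard : ∀ v, ((DF m (q - (v - 1))).image (List.cons v)).card = G m (q - (v - 1)) := by
      intro v
      rw [Finset.card_image_of_injective _ List.cons_injective, ih]
    rw [Finset.sum_congr rfl fun v _ => hcard v]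
    rw [Finset.sum_range_succ' (fun v => G m (q - (v - 1))) (q+1)]
    simp only [Nat.zero_sub, Nat.sub_zero, Nat.add_sub_cancel]
    rw [G_rec]
    have : ∑ v ∈ Finset.range (q+1), G m (q - v)
        = ∑ v ∈ Finset.range (q+1), G m v := by
      have := Finset.sum_range_reflect (fun v => G m v) (q+1)
      simpa using this
    omega

lemma avoids10_iff (a : List ℕ) : Avoids10 a ↔ a.Pairwise (· ≤ ·) := by
  rw [List.pairwise_iff_get]
  constructor
  · intro h i j hij
    exact Nat.not_lt.mp (h i j hij)
  · intro h i j hij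
    exact Nat.not_lt.mpr (h i j hij)

lemma set_eq (n p : ℕ) (hn : 1 ≤ n) (hp : 1 ≤ p) :
    {a : List ℕ | a.length = n ∧ IsPAsc p a ∧ Avoids10 a}
      = psums 0 '' ↑(DF (n - 1) (p - 1)) := by
  ext a
  simp only [Set.mem_image, Finset.mem_coe, mem_DF, Set.mem_setOf_eq]
  constructor
  · rintro ⟨hlen, ⟨hhead, hcond⟩, hav⟩
    have hpw : a.Pairwise (· ≤ ·) := (avoids10_iff a).mp hav
    obtain ⟨x, t, rfl⟩ : ∃ x t, a = x :: t := by
      cases a with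
      | nil => simp at hhead
      | cons x t => exact ⟨_, _, rfl⟩
    have hx0 : x = 0 := by simpa using hhead
    subst hx0
    have hchain : List.Chain' (· ≤ ·) (0 :: t) := hpw.isChain
    have hrec : psums 0 (diffs (0 :: t)) = 0 :: t := psums_diffs 0 t hchain
    set d := diffs (0 :: t) with hd
    have hlend : d.length = n - 1 := by
      rw [hd, diffs_length, hlen]
    refine ⟨d, ⟨hlend, ?_⟩, hrec⟩
    rw [← hrec] at hcond
    apply mapsum_of_cond p hp
    intro i hi
    have hfin : i + 1 < (psums 0 d).length := by rw [psums_length]; omega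
    have hc := hcond ⟨i + 1, hfin⟩ (by simp)
    rw [List.get_eq_getElem] at hc
    simp only at hc
    rw [psums_get 0 d (i + 1) (by omega), psums_take 0 d i, psums_ascN] at hc
    simpa using hc
  · rintro ⟨d, ⟨hlen, hsum⟩, rfl⟩
    refine ⟨?_, ⟨psums_head? 0 d, ?_⟩, ?_⟩
    · rw [psums_length, hlen]; omega
    · rintro ⟨iv, hiv⟩ hi
      simp only at hi
      obtain ⟨i', rfl⟩ : ∃ i', iv = i' + 1 := ⟨iv - 1, by omega⟩
      have hlt : i' < d.length := by rw [psums_length] at hiv; omega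
      rw [List.get_eq_getElem]
      simp only
      rw [psums_get 0 d (i' + 1) (by omega), psums_take 0 d i', psums_ascN]
      have := cond_of_mapsum p hp d hsum i' hlt
      omega
    · rw [avoids10_iff]
      exact psums_pairwise 0 d


theorem stmt4 (n p : ℕ) (hn : 1 ≤ n) (hp : 1 ≤ p) :
    Set.ncard {a : List ℕ | a.length = n ∧ IsPAsc p a ∧ Avoids10 a} =
      ∑ s ∈ Finset.range n, (n - 1).choose s * (p + s - 1).choose s := by
  rw [set_eq n p hn hp, Set.ncard_image_of_injective _ (psums_injective 0),
    Set.ncard_coe_finset, card_DF]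
  unfold G
  rw [show (n - 1) + 1 = n from by omega]
  refine Finset.sum_congr rfl fun s _ => ?_
  have : p - 1 + s = p + s - 1 := by omega
  rw [this]
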